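/- Let f : ℝ → ℝ and suppose there exist f₁ : ℝ → ℝ and a measurable g : ℝ → ℝ with ∫₀^π g(t)² dt < ∞ such that f₁(t) = f₁(0) + ∫₀^t g(s) ds and f(x) = f(0) + ∫₀^x f₁(t) dt for all x, t ∈ [0,π]. Then for every ε > 0 there exist N ∈ ℕ and real coefficients b₁, b₂, a₀, a₁, …, a_N such that ∫₀^π ( f(x) − (b₁·x + b₂·x² + Σ_{n=0}^N a_n·cos(n·x)) )² dx + ∫₀^π ( f₁(x) − (b₁ + 2·b₂·x − Σ_{n=1}^N n·a_n·sin(n·x)) )² dx + ∫₀^π ( g(x) − (2·b₂ − Σ_{n=1}^N n²·a_n·cos(n·x)) )² dx < ε. -/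

import Mathlib

open Finset Real MeasureTheory intervalIntegral


noncomputable def vcos : ℕ → (ℝ → ℝ) := fun n x => Real.cos (n * x)

lemma prod_cos (a b : ℝ) : cos a * cos b = (cos (a+b) + cos (a-b))/2 := by
  rw [cos_add, cos_sub]; ring

lemma mul_cos_mem {h : ℝ → ℝ} (hh : h ∈ Submodule.span ℝ (Set.range vcos)) :
    (fun x => h x * Real.cos x) ∈ Submodule.span ℝ (Set.range vcos) := by
  induction hh using Submodule.span_induction with
  | mem w hw =>
    obtain ⟨n, rfl⟩ := hw
    match n with
    | 0 =>
      have : (fun x => vcos 0 x * Real.cos x) = vcos 1 := by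
        funext x; simp [vcos]
      rw [this]; exact Submodule.subset_span ⟨1, rfl⟩
    | (n+1) =>
      have : (fun x => vcos (n+1) x * Real.cos x)
          = (1/2 : ℝ) • vcos (n+2) + (1/2 : ℝ) • vcos n := by
        funext x
        simp only [vcos, Pi.add_apply, Pi.smul_apply, smul_eq_mul]
        rw [prod_cos]
        push_cast
        rw [show ((n:ℝ)+1) * x + x = ((n:ℝ)+2)*x by ring, show ((n:ℝ)+1) * x - x = n * x by ring]
        ring
      rw [this]
      exact Submodule.add_mem _
        (Submodule.smul_mem _ _ (Submodule.subset_span ⟨n+2, rfl⟩))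
        (Submodule.smul_mem _ _ (Submodule.subset_span ⟨n, rfl⟩))
  | zero =>
    have : (fun x : ℝ => (0:ℝ→ℝ) x * Real.cos x) = (0:ℝ→ℝ) := by funext x; simp
    rw [this]; exact Submodule.zero_mem _
  | add u w _ _ hu hw =>
    have : (fun x => (u + w) x * Real.cos x)
        = (fun x => u x * Real.cos x) + (fun x => w x * Real.cos x) := by
      funext x; simp; ring
    rw [this]; exact Submodule.add_mem _ hu hw
  | smul r u _ hu =>
    have : (fun x => (r • u) x * Real.cos x) = r • (fun x => u x * Real.cos x) := by
      funext x; simp; ring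
    rw [this]; exact Submodule.smul_mem _ _ hu

lemma pow_cos_mem (k : ℕ) :
    (fun x => Real.cos x ^ k) ∈ Submodule.span ℝ (Set.range vcos) := by
  induction k with
  | zero =>
    have : (fun x : ℝ => Real.cos x ^ 0) = vcos 0 := by funext x; simp [vcos]
    rw [this]; exact Submodule.subset_span ⟨0, rfl⟩
  | succ k ih =>
    have : (fun x : ℝ => Real.cos x ^ (k+1)) = fun x => (Real.cos x ^ k) * Real.cos x := by
      funext x; ring
    rw [this]; exact mul_cos_mem ih

lemma exists_cos_poly (p : Polynomial ℝ) : ∃ (N : ℕ) (c : ℕ → ℝ), ∀ x : ℝ,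
    p.eval (Real.cos x) = ∑ n ∈ range (N+1), c n * Real.cos (n * x) := by
  have hmem : (fun x => p.eval (Real.cos x)) ∈ Submodule.span ℝ (Set.range vcos) := by
    have : (fun x => p.eval (Real.cos x))
        = ∑ i ∈ range (p.natDegree + 1), p.coeff i • (fun x => Real.cos x ^ i) := by
      funext x
      rw [Polynomial.eval_eq_sum_range]
      simp
    rw [this]
    exact Submodule.sum_mem _ fun i _ => Submodule.smul_mem _ _ (pow_cos_mem i)
  obtain ⟨c, hc⟩ := Finsupp.mem_span_range_iff_exists_finsupp.mp hmem
  refine ⟨c.support.sup id, c, fun x => ?_⟩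
  have hsub : c.support ⊆ range (c.support.sup id + 1) := fun n hn =>
    Finset.mem_range.mpr (Nat.lt_succ_of_le (Finset.le_sup (f := id) hn))
  have := Finsupp.sum_of_support_subset c hsub (fun i a => a • vcos i)
    (by intro i _; simp)
  rw [this] at hc
  have := congrFun hc x
  simp only [Finset.sum_apply, Pi.smul_apply, smul_eq_mul, vcos] at this
  exact this.symm

lemma cs_lemma (u : ℝ → ℝ) (a b : ℝ) (hab : a ≤ b)
    (hu : IntegrableOn u (Set.Ioc a b))
    (hu2 : IntegrableOn (fun x => u x ^ 2) (Set.Ioc a b)) :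
    (∫ x in a..b, u x) ^ 2 ≤ (b - a) * ∫ x in a..b, u x ^ 2 := by
  rcases eq_or_lt_of_le hab with rfl | hlt
  · simp
  have hba : 0 < b - a := by linarith
  have hu' : IntervalIntegrable u volume a b :=
    (intervalIntegrable_iff_integrableOn_Ioc_of_le hab).mpr hu
  have hu2' : IntervalIntegrable (fun x => u x ^ 2) volume a b :=
    (intervalIntegrable_iff_integrableOn_Ioc_of_le hab).mpr hu2
  set I := ∫ x in a..b, u x with hI
  set J := ∫ x in a..b, u x ^ 2 with hJ
  set m := I / (b - a) with hm
  have hmI : m * (b - a) = I := by rw [hm]; exact div_mul_cancel₀ I hba.ne'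
  have key : (0:ℝ) ≤ J - 2 * m * I + m * I := by
    have hnn : (0:ℝ) ≤ ∫ x in a..b, (u x - m) ^ 2 :=
      intervalIntegral.integral_nonneg hab (fun x _ => sq_nonneg _)
    have hexp : (∫ x in a..b, (u x - m) ^ 2)
        = J - 2 * m * I + m ^ 2 * (b - a) := by
      have h1 : (fun x => (u x - m) ^ 2)
          = fun x => (u x ^ 2 + m ^ 2) - 2 * m * u x := by
        funext x; ring
      rw [h1, intervalIntegral.integral_sub
        (hu2'.add intervalIntegrable_const)
        (by simpa using hu'.const_mul (2 * m)),
        intervalIntegral.integral_add hu2' intervalIntegrable_const,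
        intervalIntegral.integral_const_mul, intervalIntegral.integral_const]
      simp only [smul_eq_mul, ← hI, ← hJ]
      ring
    have : m ^ 2 * (b - a) = m * I := by rw [pow_two, mul_assoc, hmI]
    linarith [hexp ▸ hnn]
  have hmIJ : m * I ≤ J := by linarith
  have h2 : (m * I) * (b - a) = I ^ 2 := by
    rw [mul_comm m I, mul_assoc, hmI, pow_two]
  nlinarith

lemma g_int (g : ℝ → ℝ) (hgmeas : Measurable g)
    (hgL2 : IntegrableOn (fun t => g t ^ 2) (Set.Ioc 0 π)) :
    IntegrableOn g (Set.Ioc 0 π) := by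
  have hb : IntegrableOn (fun x => g x ^ 2 + 1) (Set.Ioc 0 π) :=
    hgL2.add ((integrableOn_const_iff).mpr (Or.inr (by
      rw [Real.volume_Ioc]; exact ENNReal.ofReal_lt_top)))
  apply Integrable.mono' hb hgmeas.aestronglyMeasurable.restrict
  filter_upwards with x
  rw [Real.norm_eq_abs]
  nlinarith [sq_nonneg (|g x| - 1), sq_abs (g x)]

lemma sq_sub_int (g : ℝ → ℝ) (hgmeas : Measurable g)
    (hgL2 : IntegrableOn (fun t => g t ^ 2) (Set.Ioc 0 π))
    (ψ : ℝ → ℝ) (hψ : Continuous ψ) :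
    IntegrableOn (fun x => (g x - ψ x) ^ 2) (Set.Ioc 0 π) := by
  obtain ⟨C, hC⟩ := isCompact_Icc.exists_bound_of_continuousOn
    (hψ.continuousOn : ContinuousOn ψ (Set.Icc (0:ℝ) π))
  have expand : (fun x => (g x - ψ x) ^ 2)
      = fun x => (g x ^ 2 + ψ x ^ 2) - (2 * ψ x) * g x := by
    funext x; ring
  rw [expand]
  apply Integrable.sub
  · exact hgL2.add ((hψ.pow 2).integrableOn_Ioc)
  · apply Integrable.bdd_mul (c := 2 * (|C| + 1))
      (g_int g hgmeas hgL2) ((continuous_const.mul hψ).aestronglyMeasurable.restrict)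
    rw [ae_restrict_iff' measurableSet_Ioc]
    filter_upwards with x hx
    have := hC x (Set.mem_Icc.mpr ⟨hx.1.le, hx.2⟩)
    rw [Real.norm_eq_abs] at this ⊢
    simp only [Pi.mul_apply]
    rw [abs_mul, abs_two]
    have : |ψ x| ≤ |C| + 1 := by
      calc |ψ x| ≤ C := this
        _ ≤ |C| + 1 := by cases abs_cases C <;> linarith
    linarith
  

lemma cos_density (g : ℝ → ℝ) (hgmeas : Measurable g)
    (hgL2 : IntegrableOn (fun t => g t ^ 2) (Set.Ioc 0 π)) :
    ∀ δ > (0:ℝ), ∃ (N : ℕ) (c : ℕ → ℝ),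
      (∫ x in (0:ℝ)..π, (g x - ∑ n ∈ range (N+1), c n * Real.cos (n * x)) ^ 2) < δ := by
  intro δ hδ
  have hπ : (0:ℝ) ≤ π := pi_pos.le
  set G := (Set.Ioc 0 π).indicator g with hG
  have hGmeas : Measurable G := hgmeas.indicator measurableSet_Ioc
  have hGsq : (fun x => G x ^ 2) = (Set.Ioc 0 π).indicator (fun x => g x ^ 2) := by
    funext x
    by_cases h : x ∈ Set.Ioc 0 π <;>
      simp [hG, Set.indicator_of_mem, Set.indicator_of_notMem, h]
  have hGL2 : MemLp G 2 volume :=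
    (memLp_two_iff_integrable_sq hGmeas.aestronglyMeasurable).mpr
      (by rw [hGsq]; exact (integrable_indicator_iff measurableSet_Ioc).mpr hgL2)
  have h2 : (ENNReal.ofReal (2:ℝ)) = 2 := by norm_num
  have hGL2' : MemLp G (ENNReal.ofReal (2:ℝ)) volume := h2 ▸ hGL2
  obtain ⟨φ, -, hφint, hφcont, hφmem⟩ :=
    hGL2'.exists_hasCompactSupport_integral_rpow_sub_le (by norm_num : (0:ℝ) < 2)
      (show (0:ℝ) < δ/8 by linarith)
  have hφmem2 : MemLp φ 2 volume := h2 ▸ hφmem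
  have hnormeq : (fun x => ‖G x - φ x‖ ^ (2:ℝ)) = fun x => (G x - φ x) ^ 2 := by
    funext x
    rw [show (2:ℝ) = ((2:ℕ):ℝ) by norm_num, Real.rpow_natCast, Real.norm_eq_abs, sq_abs]
  have hGφsq : Integrable (fun x => (G x - φ x) ^ 2) volume := (hGL2.sub hφmem2).integrable_sq
  have hA : (∫ x in Set.Ioc (0:ℝ) π, (g x - φ x) ^ 2) ≤ δ/8 := by
    have heq : (∫ x in Set.Ioc (0:ℝ) π, (g x - φ x) ^ 2)
        = ∫ x in Set.Ioc (0:ℝ) π, (G x - φ x) ^ 2 := by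
      apply setIntegral_congr_fun measurableSet_Ioc
      intro x hx
      simp [hG, Set.indicator_of_mem hx]
    rw [heq]
    calc (∫ x in Set.Ioc (0:ℝ) π, (G x - φ x) ^ 2)
        ≤ ∫ x, (G x - φ x) ^ 2 :=
          setIntegral_le_integral hGφsq (Filter.Eventually.of_forall fun x => sq_nonneg _)
      _ = ∫ x, ‖G x - φ x‖ ^ (2:ℝ) := by rw [hnormeq]
      _ ≤ δ/8 := hφint
  -- Weierstrass step
  set δ₂ := Real.sqrt (δ/(8*π)) with hδ₂
  have hδ₂pos : 0 < δ₂ := Real.sqrt_pos.mpr (by positivity)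
  set ψ : C(Set.Icc (-1:ℝ) 1, ℝ) :=
    ⟨fun y => φ (Real.arccos y),
      hφcont.comp (Real.continuous_arccos.comp continuous_subtype_val)⟩ with hψ
  obtain ⟨p, hp⟩ := exists_polynomial_near_continuousMap (-1) 1 ψ δ₂ hδ₂pos
  have hpφ : ∀ x ∈ Set.Icc (0:ℝ) π, |p.eval (Real.cos x) - φ x| ≤ δ₂ := by
    intro x hx
    have hy : Real.cos x ∈ Set.Icc (-1:ℝ) 1 := ⟨Real.neg_one_le_cos x, Real.cos_le_one x⟩
    have hb := (p.toContinuousMapOn (Set.Icc (-1:ℝ) 1) - ψ).norm_coe_le_norm ⟨_, hy⟩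
    have happ : (p.toContinuousMapOn (Set.Icc (-1:ℝ) 1) - ψ) ⟨_, hy⟩
        = p.eval (Real.cos x) - φ x := by
      simp [hψ, Polynomial.toContinuousMapOn_apply, Polynomial.toContinuousMap_apply,
        Real.arccos_cos hx.1 hx.2]
    rw [happ, Real.norm_eq_abs] at hb
    exact hb.trans hp.le
  obtain ⟨N, c, hc⟩ := exists_cos_poly p
  refine ⟨N, c, ?_⟩
  set q : ℝ → ℝ := fun x => p.eval (Real.cos x) with hq
  have hqcont : Continuous q := p.continuous.comp Real.continuous_cos
  have hintegrand : (∫ x in (0:ℝ)..π, (g x - ∑ n ∈ range (N+1), c n * Real.cos (n * x)) ^ 2)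
      = ∫ x in (0:ℝ)..π, (g x - q x) ^ 2 :=
    intervalIntegral.integral_congr (fun x _ => by rw [hq]; rw [← hc x])
  rw [hintegrand]
  have hLHS : IntervalIntegrable (fun x => (g x - q x) ^ 2) volume 0 π :=
    (intervalIntegrable_iff_integrableOn_Ioc_of_le hπ).mpr (sq_sub_int g hgmeas hgL2 q hqcont)
  have hgφI : IntervalIntegrable (fun x => (g x - φ x) ^ 2) volume 0 π :=
    (intervalIntegrable_iff_integrableOn_Ioc_of_le hπ).mpr (sq_sub_int g hgmeas hgL2 φ hφcont)
  have hφqI : IntervalIntegrable (fun x => (φ x - q x) ^ 2) volume 0 π :=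
    (((hφcont.sub hqcont).pow 2).continuousOn).intervalIntegrable
  have step1 : (∫ x in (0:ℝ)..π, (g x - q x) ^ 2)
      ≤ ∫ x in (0:ℝ)..π, (2 * (g x - φ x) ^ 2 + 2 * (φ x - q x) ^ 2) := by
    apply integral_mono_on hπ hLHS
      ((hgφI.const_mul 2).add (hφqI.const_mul 2))
    intro x _
    nlinarith [sq_nonneg ((g x - φ x) - (φ x - q x))]
  have step2 : (∫ x in (0:ℝ)..π, (2 * (g x - φ x) ^ 2 + 2 * (φ x - q x) ^ 2))
      = 2 * (∫ x in (0:ℝ)..π, (g x - φ x) ^ 2) + 2 * ∫ x in (0:ℝ)..π, (φ x - q x) ^ 2 := by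
    rw [intervalIntegral.integral_add (hgφI.const_mul 2) (hφqI.const_mul 2),
      intervalIntegral.integral_const_mul, intervalIntegral.integral_const_mul]
  have bound1 : (∫ x in (0:ℝ)..π, (g x - φ x) ^ 2) ≤ δ/8 := by
    rw [intervalIntegral.integral_of_le hπ]; exact hA
  have bound2 : (∫ x in (0:ℝ)..π, (φ x - q x) ^ 2) ≤ δ/8 := by
    have hconst : (∫ x in (0:ℝ)..π, δ₂ ^ 2) = π * δ₂ ^ 2 := by
      rw [intervalIntegral.integral_const]; simp
    calc (∫ x in (0:ℝ)..π, (φ x - q x) ^ 2) ≤ ∫ x in (0:ℝ)..π, δ₂ ^ 2 := by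
          apply integral_mono_on hπ hφqI intervalIntegrable_const
          intro x hx
          have h1 := hpφ x hx
          have h2 := abs_le.mp h1
          rw [hq]
          nlinarith [h2.1, h2.2]
      _ = π * δ₂ ^ 2 := hconst
      _ = δ/8 := by
          rw [hδ₂, Real.sq_sqrt (by positivity)]
          field_simp
  calc (∫ x in (0:ℝ)..π, (g x - q x) ^ 2)
      ≤ 2 * (∫ x in (0:ℝ)..π, (g x - φ x) ^ 2) + 2 * ∫ x in (0:ℝ)..π, (φ x - q x) ^ 2 := by
        rw [← step2]; exact step1
    _ ≤ 2 * (δ/8) + 2 * (δ/8) := by linarith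
    _ < δ := by linarith

lemma Icc_sum_eq (F : ℕ → ℝ) (N : ℕ) :
    ∑ n ∈ Icc 1 N, F n = ∑ k ∈ range N, F (k+1) := by
  rw [← Finset.Ico_add_one_right_eq_Icc, Finset.sum_Ico_eq_sum_range]
  simp [add_comm]

lemma integral_cos_nx (n : ℕ) (x : ℝ) (hn : n ≠ 0) :
    ∫ t in (0:ℝ)..x, Real.cos (n * t) = Real.sin (n * x) / n := by
  rw [intervalIntegral.integral_comp_mul_left (fun t => Real.cos t)
    (by exact_mod_cast hn : ((n:ℝ)) ≠ 0)]
  simp [integral_cos]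
  ring

lemma integral_sin_nx (n : ℕ) (x : ℝ) (hn : n ≠ 0) :
    ∫ t in (0:ℝ)..x, Real.sin (n * t) = (1 - Real.cos (n * x)) / n := by
  rw [intervalIntegral.integral_comp_mul_left (fun t => Real.sin t)
    (by exact_mod_cast hn : ((n:ℝ)) ≠ 0)]
  simp [integral_sin]
  ring

lemma cos_sum_cont (N : ℕ) (c : ℕ → ℝ) :
    Continuous (fun x => ∑ n ∈ range (N+1), c n * Real.cos (n * x)) := by
  apply continuous_finset_sum
  intro n _
  exact continuous_const.mul (Real.continuous_cos.comp (continuous_const.mul continuous_id))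

lemma integral_cos_sum (N : ℕ) (c : ℕ → ℝ) (x : ℝ) :
    ∫ t in (0:ℝ)..x, (∑ n ∈ range (N+1), c n * Real.cos (n * t))
      = c 0 * x + ∑ n ∈ Icc 1 N, (c n / n) * Real.sin (n * x) := by
  rw [intervalIntegral.integral_finset_sum (fun n _ =>
    Continuous.intervalIntegrable (by continuity) _ _)]
  rw [Finset.sum_range_succ' (fun n => ∫ t in (0:ℝ)..x, c n * Real.cos (n * t)) N]
  rw [Icc_sum_eq]
  rw [add_comm]
  congr 1
  · rw [intervalIntegral.integral_const_mul]
    norm_num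
  · apply Finset.sum_congr rfl
    intro k _
    rw [intervalIntegral.integral_const_mul, integral_cos_nx (k+1) x (Nat.succ_ne_zero k)]
    ring

lemma integral_sin_sum (N : ℕ) (c : ℕ → ℝ) (x : ℝ) :
    ∫ t in (0:ℝ)..x, (∑ n ∈ Icc 1 N, (c n / n) * Real.sin (n * t))
      = ∑ n ∈ Icc 1 N, (c n / n ^ 2) * (1 - Real.cos (n * x)) := by
  rw [intervalIntegral.integral_finset_sum (fun n _ =>
    Continuous.intervalIntegrable (by continuity) _ _)]
  apply Finset.sum_congr rfl
  intro n hn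
  have hn0 : n ≠ 0 := by
    have := (Finset.mem_Icc.mp hn).1; omega
  have hn0' : ((n:ℝ)) ≠ 0 := by exact_mod_cast hn0
  rw [intervalIntegral.integral_const_mul, integral_sin_nx n x hn0]
  ring

theorem stmt9 (f f₁ g : ℝ → ℝ) (hgmeas : Measurable g)
    (hgL2 : IntegrableOn (fun t => g t ^ 2) (Set.Ioc 0 π))
    (hf₁ : ∀ t ∈ Set.Icc (0:ℝ) π, f₁ t = f₁ 0 + ∫ s in (0:ℝ)..t, g s)
    (hf : ∀ x ∈ Set.Icc (0:ℝ) π, f x = f 0 + ∫ t in (0:ℝ)..x, f₁ t) :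
    ∀ ε > (0:ℝ), ∃ (N : ℕ) (b₁ b₂ : ℝ) (a : ℕ → ℝ),
      (∫ x in (0:ℝ)..π,
        (f x - (b₁ * x + b₂ * x ^ 2 + ∑ n ∈ range (N + 1), a n * cos (n * x))) ^ 2) +
      (∫ x in (0:ℝ)..π,
        (f₁ x - (b₁ + 2 * b₂ * x - ∑ n ∈ Icc 1 N, n * a n * sin (n * x))) ^ 2) +
      (∫ x in (0:ℝ)..π,
        (g x - (2 * b₂ - ∑ n ∈ Icc 1 N, (n : ℝ) ^ 2 * a n * cos (n * x))) ^ 2) < ε := by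
  intro ε hε
  have hπ : (0:ℝ) ≤ π := Real.pi_pos.le
  set Cp : ℝ := 1 + π ^ 2 + π ^ 4 with hCp
  have hCppos : 0 < Cp := by positivity
  obtain ⟨N, c, hKlt0⟩ := cos_density g hgmeas hgL2 (ε / Cp) (by positivity)
  set h : ℝ → ℝ := fun x => ∑ n ∈ range (N+1), c n * Real.cos (n * x) with hh
  set e : ℝ → ℝ := fun x => g x - h x with he
  have hKlt : (∫ x in (0:ℝ)..π, e x ^ 2) < ε / Cp := hKlt0
  set K := ∫ x in (0:ℝ)..π, e x ^ 2 with hK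
  have hK0 : (0:ℝ) ≤ K :=
    intervalIntegral.integral_nonneg hπ (fun x _ => sq_nonneg _)
  have hhcont : Continuous h := cos_sum_cont N c
  have hgInt : IntegrableOn g (Set.Ioc 0 π) := g_int g hgmeas hgL2
  have heInt : IntegrableOn e (Set.Ioc 0 π) := hgInt.sub hhcont.integrableOn_Ioc
  have he2Int : IntegrableOn (fun x => e x ^ 2) (Set.Ioc 0 π) :=
    sq_sub_int g hgmeas hgL2 h hhcont
  set a : ℕ → ℝ :=
    fun n => if n = 0 then f 0 + ∑ m ∈ Icc 1 N, c m / (m:ℝ) ^ 2 else - c n / (n:ℝ) ^ 2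
    with ha
  have ha0 : a 0 = f 0 + ∑ m ∈ Icc 1 N, c m / (m:ℝ) ^ 2 := by simp [ha]
  have haS : ∀ k : ℕ, a (k+1) = - c (k+1) / ((k+1:ℕ):ℝ) ^ 2 := fun k => by
    simp only [ha]; rw [if_neg (Nat.succ_ne_zero k)]
  refine ⟨N, f₁ 0, c 0 / 2, a, ?_⟩
  -- primitives
  set E : ℝ → ℝ := fun x => ∫ t in (0:ℝ)..x, e t with hE
  set Pg : ℝ → ℝ := fun t => ∫ s in (0:ℝ)..t, g s with hPg
  have hEcont : ContinuousOn E (Set.Icc 0 π) := by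
    have h1 : IntegrableOn e (Set.Icc 0 π) := (integrableOn_Icc_iff_integrableOn_Ioc).mpr heInt
    exact (intervalIntegral.continuousOn_primitive h1).congr
      (fun x hx => by rw [hE]; exact intervalIntegral.integral_of_le hx.1)
  have hPgcont : ContinuousOn Pg (Set.Icc 0 π) := by
    have h1 : IntegrableOn g (Set.Icc 0 π) := (integrableOn_Icc_iff_integrableOn_Ioc).mpr hgInt
    exact (intervalIntegral.continuousOn_primitive h1).congr
      (fun x hx => by rw [hPg]; exact intervalIntegral.integral_of_le hx.1)
  -- pointwise identity for the second derivative level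
  have I2 : ∀ x : ℝ, (2 * (c 0 / 2) - ∑ n ∈ Icc 1 N, (n:ℝ) ^ 2 * a n * Real.cos (n * x)) = h x := by
    intro x
    rw [hh]
    simp only
    rw [Finset.sum_range_succ' (fun n => c n * Real.cos (n * x)) N,
      Icc_sum_eq (fun n => (n:ℝ) ^ 2 * a n * Real.cos (n * x)) N]
    have hterm : ∀ k ∈ range N,
        ((k+1:ℕ):ℝ) ^ 2 * a (k+1) * Real.cos ((k+1:ℕ) * x)
          = -(c (k+1) * Real.cos ((k+1:ℕ) * x)) := by
      intro k _
      rw [haS k]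
      have hne : ((k+1:ℕ):ℝ) ≠ 0 := by positivity
      field_simp
    rw [Finset.sum_congr rfl hterm, Finset.sum_neg_distrib]
    push_cast
    simp
    ring
  -- pointwise identity for the first derivative level
  have I1 : ∀ x ∈ Set.Icc (0:ℝ) π,
      f₁ x - (f₁ 0 + 2 * (c 0 / 2) * x - ∑ n ∈ Icc 1 N, (n:ℝ) * a n * Real.sin (n * x))
        = E x := by
    intro x hx
    have hgx : IntervalIntegrable g volume 0 x :=
      (intervalIntegrable_iff_integrableOn_Ioc_of_le hx.1).mpr
        (hgInt.mono_set (Set.Ioc_subset_Ioc_right hx.2))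
    have hsplit : E x = (∫ t in (0:ℝ)..x, g t) - ∫ t in (0:ℝ)..x, h t := by
      rw [hE]
      exact intervalIntegral.integral_sub hgx (hhcont.intervalIntegrable _ _)
    have hinth : (∫ t in (0:ℝ)..x, h t)
        = c 0 * x + ∑ n ∈ Icc 1 N, (c n / n) * Real.sin (n * x) := by
      rw [hh]; exact integral_cos_sum N c x
    rw [hf₁ x hx, hsplit, hinth,
      Icc_sum_eq (fun n => (n:ℝ) * a n * Real.sin (n * x)) N,
      Icc_sum_eq (fun n => (c n / (n:ℝ)) * Real.sin (n * x)) N]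
    have hterm : ∀ k ∈ range N,
        ((k+1:ℕ):ℝ) * a (k+1) * Real.sin ((k+1:ℕ) * x)
          = -((c (k+1) / ((k+1:ℕ):ℝ)) * Real.sin ((k+1:ℕ) * x)) := by
      intro k _
      rw [haS k]
      have hne : ((k+1:ℕ):ℝ) ≠ 0 := by positivity
      field_simp
    rw [Finset.sum_congr rfl hterm, Finset.sum_neg_distrib]
    ring
  -- pointwise identity for the function level
  have I0 : ∀ x ∈ Set.Icc (0:ℝ) π,
      f x - (f₁ 0 * x + (c 0 / 2) * x ^ 2 + ∑ n ∈ range (N+1), a n * Real.cos (n * x))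
        = ∫ t in (0:ℝ)..x, E t := by
    intro x hx
    have hxccπ : Set.Icc 0 x ⊆ Set.Icc 0 π := Set.Icc_subset_Icc_right hx.2
    have hPgx : IntervalIntegrable Pg volume 0 x :=
      ContinuousOn.intervalIntegrable
        (by rw [Set.uIcc_of_le hx.1]; exact hPgcont.mono hxccπ)
    have hf₁int : (∫ t in (0:ℝ)..x, f₁ t) = f₁ 0 * x + ∫ t in (0:ℝ)..x, Pg t := by
      have h1 : (∫ t in (0:ℝ)..x, f₁ t) = ∫ t in (0:ℝ)..x, (f₁ 0 + Pg t) :=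
        intervalIntegral.integral_congr (fun t ht => by
          rw [Set.uIcc_of_le hx.1] at ht
          exact hf₁ t (hxccπ ht))
      rw [h1, intervalIntegral.integral_add intervalIntegrable_const hPgx,
        intervalIntegral.integral_const]
      simp
      ring
    have hEeq : ∀ t ∈ Set.Icc (0:ℝ) x, E t
        = Pg t - (c 0 * t + ∑ n ∈ Icc 1 N, (c n / n) * Real.sin (n * t)) := by
      intro t ht
      have htπ : t ∈ Set.Icc (0:ℝ) π := hxccπ ht
      have hgt : IntervalIntegrable g volume 0 t :=
        (intervalIntegrable_iff_integrableOn_Ioc_of_le ht.1).mpr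
          (hgInt.mono_set (Set.Ioc_subset_Ioc_right htπ.2))
      rw [hE, hPg]
      simp only
      rw [show (fun s => e s) = fun s => g s - h s from rfl]
      rw [intervalIntegral.integral_sub hgt (hhcont.intervalIntegrable _ _)]
      congr 1
      rw [hh]; exact integral_cos_sum N c t
    have hEx : (∫ t in (0:ℝ)..x, E t)
        = (∫ t in (0:ℝ)..x, Pg t)
          - (c 0 * x ^ 2 / 2 + ∑ n ∈ Icc 1 N, (c n / (n:ℝ) ^ 2) * (1 - Real.cos (n * x))) := by
      have h1 : (∫ t in (0:ℝ)..x, E t)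
          = ∫ t in (0:ℝ)..x, (Pg t - (c 0 * t + ∑ n ∈ Icc 1 N, (c n / n) * Real.sin (n * t))) :=
        intervalIntegral.integral_congr (fun t ht => by
          rw [Set.uIcc_of_le hx.1] at ht; exact hEeq t ht)
      have hcont2 : Continuous fun t : ℝ =>
          c 0 * t + ∑ n ∈ Icc 1 N, (c n / (n:ℝ)) * Real.sin (n * t) := by
        apply (continuous_const.mul continuous_id).add
        apply continuous_finset_sum
        intro n _
        exact continuous_const.mul (Real.continuous_sin.comp (continuous_const.mul continuous_id))
      rw [h1, intervalIntegral.integral_sub hPgx (hcont2.intervalIntegrable _ _)]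
      congr 1
      rw [intervalIntegral.integral_add (f := fun t => c 0 * t)
        (g := fun t => ∑ n ∈ Icc 1 N, (c n / (n:ℝ)) * Real.sin (n * t))
        (Continuous.intervalIntegrable (continuous_const.mul continuous_id) _ _)
        (Continuous.intervalIntegrable (continuous_finset_sum _ (fun n _ =>
          continuous_const.mul (Real.continuous_sin.comp
            (continuous_const.mul continuous_id)))) _ _)]
      congr 1
      · rw [intervalIntegral.integral_const_mul, integral_id]
        ring
      · exact integral_sin_sum N c x
    rw [hf x hx, hf₁int, hEx]
    rw [Finset.sum_range_succ' (fun n => a n * Real.cos ((n:ℕ) * x)) N, ha0,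
      Icc_sum_eq (fun m => c m / (m:ℝ) ^ 2) N,
      Icc_sum_eq (fun n => (c n / (n:ℝ) ^ 2) * (1 - Real.cos (n * x))) N]
    have hterm : ∀ k ∈ range N,
        (c (k+1) / ((k+1:ℕ):ℝ) ^ 2) * (1 - Real.cos ((k+1:ℕ) * x))
          = a (k+1) * Real.cos ((k+1:ℕ) * x) + c (k+1) / ((k+1:ℕ):ℝ) ^ 2 := by
      intro k _
      rw [haS k]
      have hne : ((k+1:ℕ):ℝ) ≠ 0 := by positivity
      field_simp
      ring
    rw [Finset.sum_congr rfl hterm, Finset.sum_add_distrib]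
    simp only [Nat.cast_zero, zero_mul, Real.cos_zero, mul_one, Nat.cast_add, Nat.cast_one]
    ring
  -- quantitative bounds
  have hEub : ∀ x ∈ Set.Icc (0:ℝ) π, E x ^ 2 ≤ π * K := by
    intro x hx
    have h1 : IntegrableOn e (Set.Ioc 0 x) := heInt.mono_set (Set.Ioc_subset_Ioc_right hx.2)
    have h2 : IntegrableOn (fun t => e t ^ 2) (Set.Ioc 0 x) :=
      he2Int.mono_set (Set.Ioc_subset_Ioc_right hx.2)
    have cs := cs_lemma e 0 x hx.1 h1 h2
    have hmon : (∫ t in (0:ℝ)..x, e t ^ 2) ≤ K := by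
      rw [hK, intervalIntegral.integral_of_le hx.1, intervalIntegral.integral_of_le hπ]
      exact setIntegral_mono_set he2Int
        (Filter.Eventually.of_forall fun t => sq_nonneg _)
        ((Set.Ioc_subset_Ioc_right hx.2).eventuallyLE)
    have h0 : (0:ℝ) ≤ ∫ t in (0:ℝ)..x, e t ^ 2 :=
      intervalIntegral.integral_nonneg hx.1 (fun _ _ => sq_nonneg _)
    have hEx : E x = ∫ t in (0:ℝ)..x, e t := by rw [hE]
    rw [hEx]
    nlinarith [hx.1, hx.2, Real.pi_pos]
  have hEii : IntervalIntegrable E volume 0 π :=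
    ContinuousOn.intervalIntegrable (by rw [Set.uIcc_of_le hπ]; exact hEcont)
  have hE2ii : IntervalIntegrable (fun x => E x ^ 2) volume 0 π :=
    ContinuousOn.intervalIntegrable (by rw [Set.uIcc_of_le hπ]; exact hEcont.pow 2)
  have hEsq : (∫ x in (0:ℝ)..π, E x ^ 2) ≤ π ^ 2 * K := by
    calc (∫ x in (0:ℝ)..π, E x ^ 2) ≤ ∫ _x in (0:ℝ)..π, π * K :=
        intervalIntegral.integral_mono_on hπ hE2ii intervalIntegrable_const hEub
      _ = π ^ 2 * K := by rw [intervalIntegral.integral_const]; simp; ring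
  have hEIoc : IntegrableOn E (Set.Ioc 0 π) :=
    (intervalIntegrable_iff_integrableOn_Ioc_of_le hπ).mp hEii
  have hE2Ioc : IntegrableOn (fun x => E x ^ 2) (Set.Ioc 0 π) :=
    (intervalIntegrable_iff_integrableOn_Ioc_of_le hπ).mp hE2ii
  have hFub : ∀ x ∈ Set.Icc (0:ℝ) π, (∫ t in (0:ℝ)..x, E t) ^ 2 ≤ π ^ 3 * K := by
    intro x hx
    have h1 : IntegrableOn E (Set.Ioc 0 x) := hEIoc.mono_set (Set.Ioc_subset_Ioc_right hx.2)
    have h2 : IntegrableOn (fun t => E t ^ 2) (Set.Ioc 0 x) :=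
      hE2Ioc.mono_set (Set.Ioc_subset_Ioc_right hx.2)
    have cs := cs_lemma E 0 x hx.1 h1 h2
    have hmon : (∫ t in (0:ℝ)..x, E t ^ 2) ≤ π ^ 2 * K := by
      refine le_trans ?_ hEsq
      rw [intervalIntegral.integral_of_le hx.1, intervalIntegral.integral_of_le hπ]
      exact setIntegral_mono_set hE2Ioc
        (Filter.Eventually.of_forall fun t => sq_nonneg _)
        ((Set.Ioc_subset_Ioc_right hx.2).eventuallyLE)
    have h0 : (0:ℝ) ≤ ∫ t in (0:ℝ)..x, E t ^ 2 :=
      intervalIntegral.integral_nonneg hx.1 (fun _ _ => sq_nonneg _)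
    nlinarith [hx.1, hx.2, Real.pi_pos]
  -- the three integrals
  have hthird : (∫ x in (0:ℝ)..π,
      (g x - (2 * (c 0 / 2) - ∑ n ∈ Icc 1 N, (n:ℝ) ^ 2 * a n * Real.cos (n * x))) ^ 2) = K := by
    rw [hK]
    apply intervalIntegral.integral_congr
    intro x _
    simp only [he]
    rw [I2 x]
  have hsecond : (∫ x in (0:ℝ)..π,
      (f₁ x - (f₁ 0 + 2 * (c 0 / 2) * x - ∑ n ∈ Icc 1 N, (n:ℝ) * a n * Real.sin (n * x))) ^ 2)
        ≤ π ^ 2 * K := by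
    have heq : (∫ x in (0:ℝ)..π,
        (f₁ x - (f₁ 0 + 2 * (c 0 / 2) * x - ∑ n ∈ Icc 1 N, (n:ℝ) * a n * Real.sin (n * x))) ^ 2)
          = ∫ x in (0:ℝ)..π, E x ^ 2 := by
      apply intervalIntegral.integral_congr
      intro x hx
      rw [Set.uIcc_of_le hπ] at hx
      simp only []
      rw [I1 x hx]
    rw [heq]; exact hEsq
  have hFcont : ContinuousOn (fun x => ∫ t in (0:ℝ)..x, E t) (Set.Icc 0 π) := by
    have h1 : IntegrableOn E (Set.Icc 0 π) := (integrableOn_Icc_iff_integrableOn_Ioc).mpr hEIoc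
    exact (intervalIntegral.continuousOn_primitive h1).congr
      (fun x hx => intervalIntegral.integral_of_le hx.1)
  have hF2ii : IntervalIntegrable (fun x => (∫ t in (0:ℝ)..x, E t) ^ 2) volume 0 π :=
    ContinuousOn.intervalIntegrable (by rw [Set.uIcc_of_le hπ]; exact hFcont.pow 2)
  have hfirst : (∫ x in (0:ℝ)..π,
      (f x - (f₁ 0 * x + (c 0 / 2) * x ^ 2 + ∑ n ∈ range (N+1), a n * Real.cos (n * x))) ^ 2)
        ≤ π ^ 4 * K := by
    have heq : (∫ x in (0:ℝ)..π,
        (f x - (f₁ 0 * x + (c 0 / 2) * x ^ 2 + ∑ n ∈ range (N+1), a n * Real.cos (n * x))) ^ 2)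
          = ∫ x in (0:ℝ)..π, (∫ t in (0:ℝ)..x, E t) ^ 2 := by
      apply intervalIntegral.integral_congr
      intro x hx
      rw [Set.uIcc_of_le hπ] at hx
      simp only []
      rw [I0 x hx]
    rw [heq]
    calc (∫ x in (0:ℝ)..π, (∫ t in (0:ℝ)..x, E t) ^ 2) ≤ ∫ _x in (0:ℝ)..π, π ^ 3 * K :=
        intervalIntegral.integral_mono_on hπ hF2ii intervalIntegrable_const hFub
      _ = π ^ 4 * K := by rw [intervalIntegral.integral_const]; simp; ring
  have hfin : Cp * K < ε := by
    have h1 : Cp * K < Cp * (ε / Cp) := by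
      exact mul_lt_mul_of_pos_left hKlt hCppos
    rwa [mul_div_cancel₀ ε hCppos.ne'] at h1
  have hsum : K + π ^ 2 * K + π ^ 4 * K = Cp * K := by rw [hCp]; ring
  linarith [hfirst, hsecond, hthird.le, hthird.ge]
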